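/- Let F be a weakly convex sparseness measure, J(x) = Σ_{i=1}^N F(x_i), and let γ ∈ [0,1) be a null-space constant bound for (J,A,K). Let M0 > 0 and define C1 = (F(M0)/M0)·(1−γ)/(1+γ) and C2 = (α√N + C1)/(C1·σ). Then for all vectors x*, x ∈ ℝ^N with ‖x*‖₀ ≤ K, ‖x − x*‖₂ ≤ M0, and ‖x − x*‖₂ ≥ 2·C2·‖A(x − x*)‖₂, one has J(x) − J(x*) ≥ (C1/2)·‖x − x*‖₂. -/

import Mathlib

open Filter Set

/-- Weak convexity on `[0,∞)` with parameter `ρ`. -/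
def WeaklyConvexOnNonneg (F : ℝ → ℝ) (ρ : ℝ) : Prop :=
  ∀ t₁ t₂ : ℝ, 0 ≤ t₁ → 0 ≤ t₂ → ∀ l : ℝ, 0 ≤ l → l ≤ 1 →
    F (l * t₁ + (1 - l) * t₂) ≤
      l * F t₁ + (1 - l) * F t₂ - ρ * l * (1 - l) * (t₁ - t₂) ^ 2

/-- `F` is a weakly convex sparseness measure with weak-convexity parameter `ρ ≤ 0`. -/
structure IsWCSM (F : ℝ → ℝ) (ρ : ℝ) : Prop where
  zero : F 0 = 0
  even : ∀ t, F (-t) = F t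
  nontrivial : ∃ t, F t ≠ 0
  mono : ∀ s t : ℝ, 0 ≤ s → s ≤ t → F s ≤ F t
  ratio_anti : ∀ s t : ℝ, 0 < s → s ≤ t → F t / t ≤ F s / s
  rho_nonpos : ρ ≤ 0
  wconv : WeaklyConvexOnNonneg F ρ

/-- `α = lim_{t→0⁺} F(t)/t`, finite and positive, with `F(t) ≤ α|t|` for all `t`. -/
def IsAlpha (F : ℝ → ℝ) (α : ℝ) : Prop :=
  0 < α ∧ Tendsto (fun t => F t / t) (nhdsWithin 0 (Set.Ioi 0)) (nhds α) ∧
    ∀ t : ℝ, F t ≤ α * |t|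

/-- The generalized gradient set `∂F(t)`; by convention `∂F(0) = {0}`. -/
noncomputable def genGrad (F : ℝ → ℝ) (t : ℝ) : Set ℝ :=
  if t = 0 then {0}
  else {f : ℝ | ∀ ν : ℝ,
    ν * f ≤ Filter.limsup (fun θ => (F (t + θ * ν) - F t) / θ) (nhdsWithin 0 (Set.Ioi 0))}

/-- Euclidean (`ℓ2`) norm of a vector. -/
noncomputable def l2 {n : ℕ} (x : Fin n → ℝ) : ℝ := Real.sqrt (∑ i, (x i) ^ 2)

/-- `ℓ1` norm of a vector. -/
def l1 {n : ℕ} (x : Fin n → ℝ) : ℝ := ∑ i, |x i|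

/-- `ℓ0` "norm": number of nonzero entries. -/
noncomputable def l0 {n : ℕ} (x : Fin n → ℝ) : ℕ :=
  (Finset.univ.filter (fun i => x i ≠ 0)).card

/-- `z_S`: the vector equal to `z` on `S` and zero elsewhere. -/
def restr {n : ℕ} (x : Fin n → ℝ) (S : Finset (Fin n)) : Fin n → ℝ :=
  fun i => if i ∈ S then x i else 0

/-- `γ` is a null-space-constant bound for `(J, A, K)`. -/
def NSCBound {M N : ℕ} (J : (Fin N → ℝ) → ℝ) (A : Matrix (Fin M) (Fin N) ℝ)
    (K : ℕ) (γ : ℝ) : Prop :=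
  ∀ z : Fin N → ℝ, A.mulVec z = 0 → ∀ S : Finset (Fin N), S.card ≤ K →
    J (restr z S) ≤ γ * J (restr z Sᶜ)

/-- Spectral norm (`ℓ2`-operator norm) of a matrix. -/
noncomputable def opNorm2 {m n : ℕ} (A : Matrix (Fin m) (Fin n) ℝ) : ℝ :=
  sSup {c : ℝ | ∃ v : Fin n → ℝ, l2 v ≤ 1 ∧ c = l2 (A.mulVec v)}

section helpers

variable {F : ℝ → ℝ} {ρ : ℝ}

lemma F_abs (hF : IsWCSM F ρ) (t : ℝ) : F |t| = F t := by
  rcases abs_cases t with ⟨h, _⟩ | ⟨h, _⟩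
  · rw [h]
  · rw [h, hF.even]

lemma F_nonneg (hF : IsWCSM F ρ) (t : ℝ) : 0 ≤ F t := by
  rw [← F_abs hF t, ← hF.zero]
  exact hF.mono 0 |t| le_rfl (abs_nonneg t)

lemma F_subadd_nonneg (hF : IsWCSM F ρ) {s t : ℝ} (hs : 0 ≤ s) (ht : 0 ≤ t) : F (s + t) ≤ F s + F t := by
  rcases eq_or_lt_of_le hs with h | h
  · simp [← h, hF.zero]
  rcases eq_or_lt_of_le ht with h' | h'
  · simp [← h', hF.zero]
  have hst : 0 < s + t := by linarith
  have h1 := hF.ratio_anti s (s + t) h (by linarith)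
  have h2 := hF.ratio_anti t (s + t) h' (by linarith)
  rw [div_le_div_iff₀ hst h] at h1
  rw [div_le_div_iff₀ hst h'] at h2
  nlinarith

lemma F_subadd (hF : IsWCSM F ρ) (a b : ℝ) : F (a + b) ≤ F a + F b := by
  calc F (a + b) = F |a + b| := (F_abs hF _).symm
    _ ≤ F (|a| + |b|) := hF.mono _ _ (abs_nonneg _) (abs_add_le a b)
    _ ≤ F |a| + F |b| := F_subadd_nonneg hF (abs_nonneg a) (abs_nonneg b)
    _ = F a + F b := by rw [F_abs hF, F_abs hF]

lemma F_sub_le (hF : IsWCSM F ρ) (a b : ℝ) : F a - F b ≤ F (a - b) := by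
  have := F_subadd hF (a - b) b
  simp only [sub_add_cancel] at this
  linarith

lemma F_lower (hF : IsWCSM F ρ) {M0 t : ℝ} (hM0 : 0 < M0) (ht : 0 ≤ t) (htM : t ≤ M0) :
    F M0 / M0 * t ≤ F t := by
  rcases eq_or_lt_of_le ht with h | h
  · simp [← h, F_nonneg hF]
  have h1 := hF.ratio_anti t M0 h htM
  rw [div_le_div_iff₀ hM0 h] at h1
  rw [div_mul_eq_mul_div, div_le_iff₀ hM0]
  linarith

lemma F_M0_pos (hF : IsWCSM F ρ) {M0 : ℝ} (hM0 : 0 < M0) : 0 < F M0 := by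
  obtain ⟨t, ht⟩ := hF.nontrivial
  have ht' : 0 < F |t| := by
    rw [F_abs hF]
    exact lt_of_le_of_ne (F_nonneg hF t) (Ne.symm ht)
  have htpos : 0 < |t| := by
    by_contra h
    push_neg at h
    have : |t| = 0 := le_antisymm h (abs_nonneg t)
    rw [this, hF.zero] at ht'
    exact lt_irrefl 0 ht'
  rcases le_or_gt |t| M0 with h | h
  · exact lt_of_lt_of_le ht' (hF.mono _ _ (abs_nonneg t) h)
  · have := hF.ratio_anti M0 |t| hM0 h.le
    have h2 : 0 < F |t| / |t| := div_pos ht' htpos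
    have h3 : 0 < F M0 / M0 := lt_of_lt_of_le h2 this
    have h4 := mul_pos h3 hM0
    rwa [div_mul_cancel₀ _ hM0.ne'] at h4

end helpers

section l2lem

variable {n : ℕ} (x : Fin n → ℝ)

lemma l2_nonneg : 0 ≤ l2 x := Real.sqrt_nonneg _

lemma l1_nonneg : 0 ≤ l1 x := Finset.sum_nonneg fun i _ => abs_nonneg _

lemma abs_le_l2 (i : Fin n) : |x i| ≤ l2 x := by
  rw [l2, ← Real.sqrt_sq_eq_abs]
  exact Real.sqrt_le_sqrt (Finset.single_le_sum (fun j _ => sq_nonneg (x j)) (Finset.mem_univ i))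

lemma l2_le_l1 : l2 x ≤ l1 x := by
  have h : ∑ i, (x i) ^ 2 ≤ (l1 x) ^ 2 := by
    have := Finset.sum_sq_le_sq_sum_of_nonneg (s := Finset.univ) (f := fun i => |x i|)
      (fun i _ => abs_nonneg (x i))
    simpa [sq_abs, l1] using this
  calc Real.sqrt (∑ i, (x i) ^ 2) ≤ Real.sqrt ((l1 x) ^ 2) := Real.sqrt_le_sqrt h
    _ = l1 x := Real.sqrt_sq (l1_nonneg x)

lemma l1_le_sqrt_card : l1 x ≤ Real.sqrt n * l2 x := by
  have h : (l1 x) ^ 2 ≤ n * ∑ i, (x i) ^ 2 := by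
    have := sq_sum_le_card_mul_sum_sq (s := Finset.univ) (f := fun i => |x i|)
    simpa [sq_abs, l1] using this
  have h2 : l1 x ≤ Real.sqrt ((n : ℝ) * ∑ i, (x i) ^ 2) := by
    rw [← Real.sqrt_sq (l1_nonneg x)]
    exact Real.sqrt_le_sqrt h
  calc l1 x ≤ Real.sqrt ((n : ℝ) * ∑ i, (x i) ^ 2) := h2
    _ = Real.sqrt n * l2 x := by rw [Real.sqrt_mul (Nat.cast_nonneg n), l2]

lemma l2_eq_norm : l2 x = ‖(WithLp.equiv 2 (Fin n → ℝ)).symm x‖ := by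
  rw [EuclideanSpace.norm_eq, l2]
  congr 1
  apply Finset.sum_congr rfl
  intro i _
  rw [Real.norm_eq_abs, sq_abs]
  rfl

lemma l2_add_le (a b : Fin n → ℝ) : l2 (a + b) ≤ l2 a + l2 b := by
  have hrfl : (WithLp.equiv 2 (Fin n → ℝ)).symm (a + b) =
      (WithLp.equiv 2 (Fin n → ℝ)).symm a + (WithLp.equiv 2 (Fin n → ℝ)).symm b := rfl
  rw [l2_eq_norm a, l2_eq_norm b, l2_eq_norm (a + b), hrfl]
  exact norm_add_le _ _

end l2lem

lemma exists_decomp {m n : ℕ} (A : Matrix (Fin m) (Fin n) ℝ) (h : Fin n → ℝ) :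
    ∃ z : Fin n → ℝ, A.mulVec z = 0 ∧
      (∀ zz : Fin n → ℝ, A.mulVec zz = 0 → (∑ i, (h i - z i) * zz i) = 0) := by
  let L : EuclideanSpace ℝ (Fin n) →ₗ[ℝ] (Fin m → ℝ) :=
    A.mulVecLin ∘ₗ (WithLp.linearEquiv 2 ℝ (Fin n → ℝ)).toLinearMap
  let W : Submodule ℝ (EuclideanSpace ℝ (Fin n)) := LinearMap.ker L
  haveI : CompleteSpace W := FiniteDimensional.complete ℝ W
  set hE : EuclideanSpace ℝ (Fin n) := (WithLp.equiv 2 (Fin n → ℝ)).symm h with hhE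
  set zE : EuclideanSpace ℝ (Fin n) :=
    (Submodule.orthogonalProjection W hE : EuclideanSpace ℝ (Fin n)) with hzE
  refine ⟨(WithLp.equiv 2 (Fin n → ℝ)) zE, ?_, ?_⟩
  · exact LinearMap.mem_ker.mp (Submodule.orthogonalProjection W hE).2
  · intro zz hzz
    have hmem : (WithLp.equiv 2 (Fin n → ℝ)).symm zz ∈ W := by
      apply LinearMap.mem_ker.mpr
      exact hzz
    have hip := Submodule.starProjection_inner_eq_zero (K := W) hE _ hmem
    rw [PiLp.inner_apply] at hip
    simp only [RCLike.inner_apply, starRingEnd_apply, star_trivial] at hip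
    rw [← hip]; exact Finset.sum_congr rfl fun i _ => mul_comm _ _


set_option maxHeartbeats 1000000 in
/-- Corollary 1: `J(x) − J(x*) ≥ (C1/2)‖x − x*‖₂` when additionally
`‖x − x*‖₂ ≥ 2C2‖A(x − x*)‖₂`. -/
theorem stmt10 {M N : ℕ} (hMN : M < N) (F : ℝ → ℝ) (ρ α : ℝ)
    (hF : IsWCSM F ρ) (hα : IsAlpha F α)
    (A : Matrix (Fin M) (Fin N) ℝ) (K : ℕ)
    (γ : ℝ) (hγ0 : 0 ≤ γ) (hγ1 : γ < 1)
    (hNSC : NSCBound (fun x => ∑ i, F (x i)) A K γ)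
    (σ : ℝ) (hσ : 0 < σ)
    (hσmin : ∀ v : Fin N → ℝ,
      (∀ z : Fin N → ℝ, A.mulVec z = 0 → (∑ i, v i * z i) = 0) →
      σ * l2 v ≤ l2 (A.mulVec v))
    (M0 : ℝ) (hM0 : 0 < M0) (C1 C2 : ℝ)
    (hC1 : C1 = F M0 / M0 * ((1 - γ) / (1 + γ)))
    (hC2 : C2 = (α * Real.sqrt N + C1) / (C1 * σ)) :
    ∀ xs x : Fin N → ℝ, l0 xs ≤ K → l2 (x - xs) ≤ M0 →
      2 * C2 * l2 (A.mulVec (x - xs)) ≤ l2 (x - xs) →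
      C1 / 2 * l2 (x - xs) ≤ (∑ i, F (x i)) - ∑ i, F (xs i) := by
  intro xs x hK hM hAle
  set h : Fin N → ℝ := x - xs with hhdef
  -- basic positivity
  have hNpos : 0 < (N : ℝ) := by
    have : 0 < N := by omega
    exact_mod_cast this
  have hsqN : 0 < Real.sqrt N := Real.sqrt_pos.mpr hNpos
  have hαpos : 0 < α := hα.1
  have hβ : 0 < F M0 / M0 := div_pos (F_M0_pos hF hM0) hM0
  have hden : (0:ℝ) < 1 + γ := by linarith
  have hcpos : 0 < (1 - γ) / (1 + γ) := div_pos (by linarith) hden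
  have hC1pos : 0 < C1 := by rw [hC1]; exact mul_pos hβ hcpos
  have hDpos : 0 < α * Real.sqrt N + C1 := by positivity
  have hC2pos : 0 < C2 := by rw [hC2]; positivity
  -- orthogonal decomposition
  obtain ⟨z, hz0, horth'⟩ := exists_decomp A h
  set v : Fin N → ℝ := h - z with hvdef
  have horth : ∀ zz : Fin N → ℝ, A.mulVec zz = 0 → (∑ i, v i * zz i) = 0 := by
    intro zz hzz
    simpa [hvdef] using horth' zz hzz
  have hAvh : A.mulVec v = A.mulVec h := by
    rw [hvdef, Matrix.mulVec_sub, hz0, sub_zero]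
  -- norm facts
  set n : ℝ := l2 h with hn
  set w : ℝ := l2 v with hw
  have hwn : 0 ≤ w := l2_nonneg v
  have hnn : 0 ≤ n := l2_nonneg h
  have hB : σ * w ≤ l2 (A.mulVec h) := by rw [← hAvh]; exact hσmin v horth
  have hBnn : 0 ≤ l2 (A.mulVec h) := l2_nonneg _
  -- bound on w
  have hC2σ : C2 * (C1 * σ) = α * Real.sqrt N + C1 := by
    rw [hC2]; field_simp
  have hwbound : (α * Real.sqrt N + C1) * w ≤ C1 * n / 2 := by
    nlinarith [mul_le_mul_of_nonneg_left hB (mul_pos hC2pos hC1pos).le,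
      mul_le_mul_of_nonneg_left hAle hC1pos.le]
  -- support set
  set S : Finset (Fin N) := Finset.univ.filter (fun i => xs i ≠ 0) with hSdef
  have hScard : S.card ≤ K := hK
  have hNS := hNSC z hz0 S hScard
  have hres : ∀ T : Finset (Fin N), (∑ i, F (restr z T i)) = ∑ i ∈ T, F (z i) := by
    intro T
    rw [← Finset.sum_filter_add_sum_filter_not Finset.univ (· ∈ T) (fun i => F (restr z T i))]
    have h1 : ∀ i ∈ Finset.univ.filter (· ∈ T), F (restr z T i) = F (z i) := by
      intro i hi; simp only [Finset.mem_filter] at hi; simp [restr, hi.2]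
    have h2 : ∀ i ∈ Finset.univ.filter (¬ · ∈ T), F (restr z T i) = 0 := by
      intro i hi; simp only [Finset.mem_filter] at hi; simp [restr, hi.2, hF.zero]
    rw [Finset.sum_congr rfl h1, Finset.sum_congr rfl h2, Finset.sum_const_zero, add_zero]
    congr 1
    ext i
    simp
  beta_reduce at hNS
  rw [hres S, hres Sᶜ] at hNS
  set a : ℝ := ∑ i ∈ S, F (z i) with ha
  set b : ℝ := ∑ i ∈ Sᶜ, F (z i) with hb
  have hann : 0 ≤ a := Finset.sum_nonneg fun i _ => F_nonneg hF _
  have hbnn : 0 ≤ b := Finset.sum_nonneg fun i _ => F_nonneg hF _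
  have hJz : (∑ i, F (z i)) = a + b := (Finset.sum_add_sum_compl S _).symm
  -- key support inequality
  have hkey : (1 - γ) / (1 + γ) * (∑ i, F (z i)) ≤ (∑ i, F (xs i + z i)) - ∑ i, F (xs i) := by
    have hsplit : -a + b ≤ (∑ i, F (xs i + z i)) - ∑ i, F (xs i) := by
      have : (∑ i, F (xs i + z i)) - (∑ i, F (xs i)) = ∑ i, (F (xs i + z i) - F (xs i)) := by
        rw [Finset.sum_sub_distrib]
      rw [this, ← Finset.sum_add_sum_compl S (fun i => F (xs i + z i) - F (xs i))]
      have h1 : -a ≤ ∑ i ∈ S, (F (xs i + z i) - F (xs i)) := by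
        rw [ha, ← Finset.sum_neg_distrib]
        apply Finset.sum_le_sum
        intro i _
        have := F_sub_le hF (xs i) (xs i + z i)
        have heq : xs i - (xs i + z i) = -(z i) := by ring
        rw [heq, hF.even] at this
        linarith
      have h2 : (∑ i ∈ Sᶜ, (F (xs i + z i) - F (xs i))) = b := by
        apply Finset.sum_congr rfl
        intro i hi
        have : xs i = 0 := by
          simp only [hSdef, Finset.mem_compl, Finset.mem_filter, Finset.mem_univ, true_and,
            not_not] at hi
          exact hi
        rw [this, zero_add, hF.zero, sub_zero]
      rw [h2]
      linarith
    rw [hJz, div_mul_eq_mul_div, div_le_iff₀ hden]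
    nlinarith
  -- lower bound on J(z)
  have hnwM : n - w ≤ M0 := by linarith [hM]
  have hnwz : n - w ≤ l2 z := by
    have hzv : z + v = h := by rw [hvdef]; abel
    have := l2_add_le z v
    rw [hzv] at this
    rw [hn, hw]
    linarith
  have hJzlow : F M0 / M0 * (n - w) ≤ ∑ i, F (z i) := by
    rcases le_or_gt n w with hc | hc
    · have : F M0 / M0 * (n - w) ≤ 0 := mul_nonpos_of_nonneg_of_nonpos hβ.le (by linarith)
      exact this.trans (Finset.sum_nonneg fun i _ => F_nonneg hF _)
    · by_cases hcase : ∀ i, |z i| ≤ M0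
      · have h1 : F M0 / M0 * l1 z ≤ ∑ i, F (z i) := by
          rw [l1, Finset.mul_sum]
          apply Finset.sum_le_sum
          intro i _
          calc F M0 / M0 * |z i| ≤ F |z i| := F_lower hF hM0 (abs_nonneg _) (hcase i)
            _ = F (z i) := F_abs hF _
        have h2 : n - w ≤ l1 z := hnwz.trans (l2_le_l1 z)
        calc F M0 / M0 * (n - w) ≤ F M0 / M0 * l1 z := by
              apply mul_le_mul_of_nonneg_left h2 hβ.le
          _ ≤ _ := h1
      · push_neg at hcase
        obtain ⟨i, hi⟩ := hcase
        have h1 : F M0 ≤ F (z i) := by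
          rw [← F_abs hF (z i)]
          exact hF.mono M0 |z i| hM0.le hi.le
        have h2 : F (z i) ≤ ∑ j, F (z j) :=
          Finset.single_le_sum (fun j _ => F_nonneg hF _) (Finset.mem_univ i)
        have h3 : F M0 / M0 * (n - w) ≤ F M0 / M0 * M0 :=
          mul_le_mul_of_nonneg_left hnwM hβ.le
        rw [div_mul_cancel₀ _ hM0.ne'] at h3
        linarith
  -- Lipschitz transfer from xs+z to x
  have hLip : (∑ i, F (xs i + z i)) - α * Real.sqrt N * w ≤ ∑ i, F (x i) := by
    have h1 : (∑ i, F (xs i + z i)) - (∑ i, F (x i)) ≤ α * l1 v := by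
      rw [← Finset.sum_sub_distrib, l1, Finset.mul_sum]
      apply Finset.sum_le_sum
      intro i _
      have h2 := F_sub_le hF (xs i + z i) (x i)
      have heq : xs i + z i - x i = -(v i) := by
        simp only [v, Pi.sub_apply, hhdef]
        ring
      rw [heq, hF.even] at h2
      calc F (xs i + z i) - F (x i) ≤ F (v i) := h2
        _ ≤ α * |v i| := hα.2.2 _
    have h3 : l1 v ≤ Real.sqrt N * w := by rw [hw]; exact l1_le_sqrt_card v
    have h4 : α * l1 v ≤ α * (Real.sqrt N * w) := mul_le_mul_of_nonneg_left h3 hαpos.le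
    linarith
  -- combine everything
  have hfin : C1 * n - (C1 + α * Real.sqrt N) * w ≤ (∑ i, F (x i)) - ∑ i, F (xs i) := by
    have e1 : C1 * (n - w) ≤ (1 - γ) / (1 + γ) * (∑ i, F (z i)) := by
      rw [hC1, mul_comm (F M0 / M0), mul_assoc]
      apply mul_le_mul_of_nonneg_left hJzlow hcpos.le
    linarith [e1, hkey, hLip]
  linarith [hfin, hwbound]
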